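/- For all real parameters c, s: if f is a monomial in R = ℝ[q_1, q_2, …] of weighted degree m (where the indeterminate q_i is assigned weight i+1), then A f + m(m−1+c)·f is a polynomial of weighted degree strictly less than m. In particular, for every m the operator A maps the subspace of polynomials of weighted degree ≤ m into itself. -/

import Mathlib

open MvPolynomial

/-- The moment coordinates: `qv i` is the indeterminate `q_i` for `i ≥ 1`, with the
convention `q_0 = 1`. -/
noncomputable def qv (i : ℕ) : MvPolynomial ℕ+ ℝ :=
  if h : 0 < i then X (⟨i, h⟩ : ℕ+) else 1

/-- The differential operator
`A = ∑_{i,j≥1} (i+1)(j+1)(q_{i+j} - q_i q_j) ∂²/∂q_i∂q_j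
    - c ∑_{i≥1} (i+1) q_i ∂/∂q_i + s ∑_{i≥1} (i+1) q_{i-1} ∂/∂q_i
    + ∑_{i,j≥0} (i+j+3) q_i q_j ∂/∂q_{i+j+2} - ∑_{i≥1} i(i+1) q_i ∂/∂q_i`
on `ℝ[q_1, q_2, …]`; on any given polynomial only finitely many summands are nonzero. -/
noncomputable def Afun (c s : ℝ) (f : MvPolynomial ℕ+ ℝ) : MvPolynomial ℕ+ ℝ :=
  (∑ᶠ p : ℕ+ × ℕ+,
      ((((p.1 : ℕ) : ℝ) + 1) * (((p.2 : ℕ) : ℝ) + 1)) •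
        ((qv ((p.1 : ℕ) + (p.2 : ℕ)) - qv (p.1 : ℕ) * qv (p.2 : ℕ)) *
          pderiv p.1 (pderiv p.2 f)))
    - c • (∑ᶠ i : ℕ+, (((i : ℕ) : ℝ) + 1) • (qv (i : ℕ) * pderiv i f))
    + s • (∑ᶠ i : ℕ+, (((i : ℕ) : ℝ) + 1) • (qv ((i : ℕ) - 1) * pderiv i f))
    + (∑ᶠ p : ℕ × ℕ,
        ((p.1 : ℝ) + (p.2 : ℝ) + 3) •
          (qv p.1 * qv p.2 * pderiv ((p.1 + p.2 + 2).toPNat (by omega)) f))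
    - (∑ᶠ i : ℕ+, (((i : ℕ) : ℝ) * (((i : ℕ) : ℝ) + 1)) • (qv (i : ℕ) * pderiv i f))

/-- The weighted degree of a monomial exponent `d`, where the indeterminate `q_i` is
assigned weight `i + 1`. -/
def wdeg (d : ℕ+ →₀ ℕ) : ℕ :=
  ∑ i ∈ d.support, d i * ((i : ℕ) + 1)

namespace AfunAux

abbrev P := MvPolynomial ℕ+ ℝ

/-- exponent of `qv k` -/
noncomputable def sexp (k : ℕ) : ℕ+ →₀ ℕ :=
  if h : 0 < k then Finsupp.single (⟨k, h⟩ : ℕ+) 1 else 0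

lemma qv_eq (k : ℕ) : qv k = monomial (sexp k) 1 := by
  unfold qv sexp
  split_ifs with h
  · rfl
  · rw [monomial_zero', C_1]

lemma qv_coe (i : ℕ+) : qv (i : ℕ) = monomial (Finsupp.single i 1) 1 := by
  rw [qv_eq]
  unfold sexp
  rw [dif_pos i.pos]
  congr 1

lemma wdeg_eq_sum (d : ℕ+ →₀ ℕ) : wdeg d = d.sum fun i k => k * ((i : ℕ) + 1) := rfl

lemma wdeg_add (a b : ℕ+ →₀ ℕ) : wdeg (a + b) = wdeg a + wdeg b := by
  simp only [wdeg_eq_sum]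
  exact Finsupp.sum_add_index' (fun _ => by simp) (fun _ _ _ => by ring)

lemma wdeg_single (i : ℕ+) : wdeg (Finsupp.single i 1) = (i : ℕ) + 1 := by
  rw [wdeg_eq_sum, Finsupp.sum_single_index (by simp), one_mul]

lemma wdeg_sexp_le (k : ℕ) : wdeg (sexp k) ≤ k + 1 := by
  unfold sexp
  split_ifs with h
  · refine le_trans (le_of_eq (wdeg_single ⟨k, h⟩)) ?_
    exact le_rfl
  · simp [wdeg]

lemma single_add_sub {d : ℕ+ →₀ ℕ} {i : ℕ+} (h : d i ≠ 0) :
    Finsupp.single i 1 + (d - Finsupp.single i 1) = d := by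
  rw [add_comm]
  exact tsub_add_cancel_of_le (Finsupp.single_le_iff.mpr (Nat.one_le_iff_ne_zero.mpr h))

lemma wdeg_sub_add {d : ℕ+ →₀ ℕ} {i : ℕ+} (h : d i ≠ 0) :
    wdeg (d - Finsupp.single i 1) + ((i : ℕ) + 1) = wdeg d := by
  conv_rhs => rw [← single_add_sub h]
  rw [wdeg_add, wdeg_single]
  ring

/-- the submodule of polynomials all of whose monomials have weighted degree
satisfying `Q`. -/
noncomputable def wsub (Q : ℕ → Prop) : Submodule ℝ P where
  carrier := {f | ∀ e ∈ f.support, Q (wdeg e)}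
  zero_mem' := by simp
  add_mem' := by
    classical
    intro a b ha hb e he
    rcases Finset.mem_union.mp (MvPolynomial.support_add he) with h | h
    exacts [ha e h, hb e h]
  smul_mem' := by
    intro c f hf e he
    exact hf e (MvPolynomial.support_smul he)

lemma mem_wsub {Q : ℕ → Prop} {f : P} : f ∈ wsub Q ↔ ∀ e ∈ f.support, Q (wdeg e) :=
  Iff.rfl

lemma monomial_mem_wsub {Q : ℕ → Prop} {d : ℕ+ →₀ ℕ} {r : ℝ} (h : r ≠ 0 → Q (wdeg d)) :
    monomial d r ∈ wsub Q := by
  classical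
  intro e he
  rw [MvPolynomial.support_monomial] at he
  split_ifs at he with hr
  · simp at he
  · rw [Finset.mem_singleton] at he
    subst he
    exact h hr

lemma wsub_mono {Q Q' : ℕ → Prop} (h : ∀ n, Q n → Q' n) : wsub Q ≤ wsub Q' :=
  fun _ hf e he => h _ (hf e he)

lemma finsum_mem_submodule {ι : Type*} (p : Submodule ℝ P) (F : ι → P)
    (h : ∀ i, F i ∈ p) : (∑ᶠ i, F i) ∈ p := by
  by_cases hf : (Function.support F).Finite
  · rw [finsum_eq_sum F hf]
    exact Submodule.sum_mem _ fun i _ => h i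
  · rw [finsum_of_infinite_support hf]
    exact p.zero_mem

end AfunAux

namespace AfunAux

open Finsupp in
lemma sub_single_apply_le (d : ℕ+ →₀ ℕ) (j i : ℕ+) :
    (d - Finsupp.single j 1 : ℕ+ →₀ ℕ) i ≤ d i := by
  rw [Finsupp.tsub_apply]
  exact Nat.sub_le _ _

lemma qv_mul_pd (i : ℕ+) (d : ℕ+ →₀ ℕ) (r : ℝ) :
    qv (i : ℕ) * pderiv i (monomial d r) = monomial d (r * (d i : ℝ)) := by
  rw [qv_coe, pderiv_monomial, monomial_mul, one_mul]
  by_cases h : d i = 0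
  · simp [h]
  · rw [single_add_sub h]

lemma pd2_mon (i j : ℕ+) (d : ℕ+ →₀ ℕ) (r : ℝ) :
    pderiv i (pderiv j (monomial d r)) =
      monomial (d - Finsupp.single j 1 - Finsupp.single i 1)
        (r * (d j : ℝ) * (((d - Finsupp.single j 1 : ℕ+ →₀ ℕ) i : ℕ) : ℝ)) := by
  rw [pderiv_monomial, pderiv_monomial]

lemma qvqv_mul_pd2 (i j : ℕ+) (d : ℕ+ →₀ ℕ) (r : ℝ) :
    qv (i : ℕ) * qv (j : ℕ) * pderiv i (pderiv j (monomial d r)) =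
      monomial d (r * (d j : ℝ) * (((d - Finsupp.single j 1 : ℕ+ →₀ ℕ) i : ℕ) : ℝ)) := by
  rw [qv_coe, qv_coe, pd2_mon, monomial_mul, monomial_mul, one_mul, one_mul]
  by_cases hj : d j = 0
  · simp [hj]
  by_cases hi : (d - Finsupp.single j 1 : ℕ+ →₀ ℕ) i = 0
  · simp [hi]
  · congr 1
    rw [add_comm (Finsupp.single i 1) (Finsupp.single j 1), add_assoc,
      single_add_sub hi, single_add_sub hj]

lemma cast_wdeg (d : ℕ+ →₀ ℕ) :
    ((wdeg d : ℕ) : ℝ) = ∑ i ∈ d.support, ((((i:ℕ)):ℝ) + 1) * (d i : ℝ) := by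
  rw [wdeg]
  push_cast
  exact Finset.sum_congr rfl fun i _ => by ring

noncomputable def Qd (d : ℕ+ →₀ ℕ) : ℝ :=
  ∑ i ∈ d.support, ((((i:ℕ)):ℝ) + 1) ^ 2 * (d i : ℝ)

lemma piece2_eq (d : ℕ+ →₀ ℕ) (r : ℝ) :
    (∑ᶠ i : ℕ+, (((i : ℕ) : ℝ) + 1) • (qv (i : ℕ) * pderiv i (monomial d r)))
      = ((wdeg d : ℝ)) • monomial d r := by
  have h1 : ∀ i : ℕ+, (((i:ℕ):ℝ)+1) • (qv (i:ℕ) * pderiv i (monomial d r))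
      = monomial d ((((i:ℕ):ℝ)+1) * (r * (d i : ℝ))) := fun i => by
    rw [qv_mul_pd, smul_monomial, smul_eq_mul]
  rw [finsum_congr h1,
    finsum_eq_finset_sum_of_support_subset _ (s := d.support) (by
      intro i hi
      simp only [Function.mem_support] at hi
      rw [Finset.mem_coe, Finsupp.mem_support_iff]
      intro h0
      apply hi
      rw [h0]
      simp),
    ← map_sum, smul_monomial, smul_eq_mul]
  congr 1
  rw [cast_wdeg, Finset.sum_mul]
  exact Finset.sum_congr rfl fun i _ => by ring

lemma piece5_eq (d : ℕ+ →₀ ℕ) (r : ℝ) :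
    (∑ᶠ i : ℕ+, (((i : ℕ) : ℝ) * (((i : ℕ) : ℝ) + 1)) • (qv (i : ℕ) * pderiv i (monomial d r)))
      = (Qd d - (wdeg d : ℝ)) • monomial d r := by
  have h1 : ∀ i : ℕ+, (((i:ℕ):ℝ) * (((i:ℕ):ℝ)+1)) • (qv (i:ℕ) * pderiv i (monomial d r))
      = monomial d ((((i:ℕ):ℝ) * (((i:ℕ):ℝ)+1)) * (r * (d i : ℝ))) := fun i => by
    rw [qv_mul_pd, smul_monomial, smul_eq_mul]
  rw [finsum_congr h1,
    finsum_eq_finset_sum_of_support_subset _ (s := d.support) (by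
      intro i hi
      simp only [Function.mem_support] at hi
      rw [Finset.mem_coe, Finsupp.mem_support_iff]
      intro h0
      apply hi
      rw [h0]
      simp),
    ← map_sum, smul_monomial, smul_eq_mul]
  congr 1
  rw [Qd, cast_wdeg, ← Finset.sum_sub_distrib, Finset.sum_mul]
  exact Finset.sum_congr rfl fun i _ => by ring

end AfunAux

namespace AfunAux

lemma piece3_mem (d : ℕ+ →₀ ℕ) (r : ℝ) :
    (∑ᶠ i : ℕ+, (((i : ℕ) : ℝ) + 1) • (qv ((i : ℕ) - 1) * pderiv i (monomial d r)))
      ∈ wsub (· < wdeg d) := by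
  apply finsum_mem_submodule
  intro i
  rw [pderiv_monomial, qv_eq, monomial_mul, one_mul, smul_monomial, smul_eq_mul]
  apply monomial_mem_wsub
  intro hc
  have hdi : d i ≠ 0 := by
    intro h0
    apply hc
    rw [h0]
    simp
  have h1 := wdeg_sub_add hdi
  have h2 := wdeg_sexp_le ((i : ℕ) - 1)
  have h3 : 1 ≤ (i : ℕ) := i.pos
  rw [wdeg_add]
  omega

lemma piece4_mem (d : ℕ+ →₀ ℕ) (r : ℝ) :
    (∑ᶠ p : ℕ × ℕ,
        ((p.1 : ℝ) + (p.2 : ℝ) + 3) •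
          (qv p.1 * qv p.2 * pderiv ((p.1 + p.2 + 2).toPNat (by omega)) (monomial d r)))
      ∈ wsub (· < wdeg d) := by
  apply finsum_mem_submodule
  rintro ⟨a, b⟩
  simp only
  rw [pderiv_monomial, qv_eq, qv_eq, monomial_mul, monomial_mul, one_mul, one_mul,
    smul_monomial, smul_eq_mul]
  apply monomial_mem_wsub
  intro hc
  set k : ℕ+ := (a + b + 2).toPNat (by omega) with hk
  have hkc : (k : ℕ) = a + b + 2 := rfl
  have hdk : d k ≠ 0 := by
    intro h0
    apply hc
    rw [h0]
    simp
  have h1 := wdeg_sub_add hdk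
  have h2 := wdeg_sexp_le a
  have h3 := wdeg_sexp_le b
  rw [wdeg_add, wdeg_add]
  rw [hkc] at h1
  omega

end AfunAux

namespace AfunAux

lemma key_cast (d : ℕ+ →₀ ℕ) (i j : ℕ+) :
    ((d j : ℕ) : ℝ) * (((d - Finsupp.single j 1 : ℕ+ →₀ ℕ) i : ℕ) : ℝ)
      = (d j : ℝ) * (d i : ℝ) - (if j = i then (d j : ℝ) else 0) := by
  classical
  rw [Finsupp.tsub_apply]
  by_cases hij : j = i
  · subst hij
    rw [if_pos rfl, Finsupp.single_eq_same]
    cases hd : d j with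
    | zero => simp
    | succ n =>
      push_cast [Nat.succ_sub_one]
      ring
  · rw [if_neg hij, Finsupp.single_eq_of_ne' hij, Nat.sub_zero, sub_zero]

lemma coeff_identity (d : ℕ+ →₀ ℕ) (r : ℝ) :
    ∑ p ∈ d.support ×ˢ d.support,
        ((((p.1 : ℕ) : ℝ) + 1) * (((p.2 : ℕ) : ℝ) + 1)) *
          (r * ((d p.2 : ℕ) : ℝ) * (((d - Finsupp.single p.2 1 : ℕ+ →₀ ℕ) p.1 : ℕ) : ℝ))
      = (((wdeg d : ℕ) : ℝ) ^ 2 - Qd d) * r := by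
  classical
  rw [Finset.sum_product]
  have step : ∀ i ∈ d.support,
      (∑ j ∈ d.support,
        ((((i : ℕ) : ℝ) + 1) * (((j : ℕ) : ℝ) + 1)) *
          (r * ((d j : ℕ) : ℝ) * (((d - Finsupp.single j 1 : ℕ+ →₀ ℕ) i : ℕ) : ℝ)))
      = (∑ j ∈ d.support,
          ((((i : ℕ) : ℝ) + 1) * ((d i : ℕ) : ℝ) * (((( j : ℕ) : ℝ) + 1) * ((d j : ℕ) : ℝ))) * r)
        - ((((i : ℕ) : ℝ) + 1) ^ 2 * ((d i : ℕ) : ℝ)) * r := by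
    intro i hi
    have hterm : ∀ j ∈ d.support,
        ((((i : ℕ) : ℝ) + 1) * (((j : ℕ) : ℝ) + 1)) *
            (r * ((d j : ℕ) : ℝ) * (((d - Finsupp.single j 1 : ℕ+ →₀ ℕ) i : ℕ) : ℝ))
          = ((((i : ℕ) : ℝ) + 1) * ((d i : ℕ) : ℝ) * (((( j : ℕ) : ℝ) + 1) * ((d j : ℕ) : ℝ))) * r
            - (if j = i then ((((i : ℕ) : ℝ) + 1) ^ 2 * ((d i : ℕ) : ℝ)) * r else 0) := by
      intro j _
      by_cases hij : j = i
      · subst hij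
        rw [if_pos rfl]
        have k := key_cast d j j
        rw [if_pos rfl] at k
        linear_combination ((((j : ℕ) : ℝ) + 1) * (((j : ℕ) : ℝ) + 1) * r) * k
      · rw [if_neg hij]
        have k := key_cast d i j
        rw [if_neg hij] at k
        linear_combination ((((i : ℕ) : ℝ) + 1) * (((j : ℕ) : ℝ) + 1) * r) * k
    rw [Finset.sum_congr rfl hterm, Finset.sum_sub_distrib, Finset.sum_ite_eq' d.support i,
      if_pos hi]
  rw [Finset.sum_congr rfl step, Finset.sum_sub_distrib, sub_mul]
  congr 1
  · rw [pow_two, cast_wdeg, Finset.sum_mul_sum, Finset.sum_mul]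
    refine Finset.sum_congr rfl fun i _ => ?_
    rw [Finset.sum_mul]
  · rw [Qd, Finset.sum_mul]

end AfunAux


namespace AfunAux

lemma piece1_first_mem (d : ℕ+ →₀ ℕ) (r : ℝ) :
    (∑ p ∈ d.support ×ˢ d.support,
        ((((p.1 : ℕ) : ℝ) + 1) * (((p.2 : ℕ) : ℝ) + 1)) •
          (qv ((p.1 : ℕ) + (p.2 : ℕ)) * pderiv p.1 (pderiv p.2 (monomial d r))))
      ∈ wsub (· < wdeg d) := by
  apply Submodule.sum_mem
  rintro ⟨i, j⟩ hp
  simp only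
  rw [pd2_mon, qv_eq, monomial_mul, one_mul, smul_monomial, smul_eq_mul]
  apply monomial_mem_wsub
  intro hc
  have hdj : d j ≠ 0 := fun h0 => hc (by rw [h0]; push_cast; ring)
  have hdi' : (d - Finsupp.single j 1 : ℕ+ →₀ ℕ) i ≠ 0 := fun h0 =>
    hc (by rw [h0]; push_cast; ring)
  have h1 := wdeg_sub_add hdj
  have h2 := wdeg_sub_add hdi'
  have h3 := wdeg_sexp_le ((i : ℕ) + (j : ℕ))
  rw [wdeg_add]
  omega

lemma piece1_eq (d : ℕ+ →₀ ℕ) (r : ℝ) :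
    (∑ᶠ p : ℕ+ × ℕ+,
      ((((p.1 : ℕ) : ℝ) + 1) * (((p.2 : ℕ) : ℝ) + 1)) •
        ((qv ((p.1 : ℕ) + (p.2 : ℕ)) - qv (p.1 : ℕ) * qv (p.2 : ℕ)) *
          pderiv p.1 (pderiv p.2 (monomial d r))))
    = (∑ p ∈ d.support ×ˢ d.support,
        ((((p.1 : ℕ) : ℝ) + 1) * (((p.2 : ℕ) : ℝ) + 1)) •
          (qv ((p.1 : ℕ) + (p.2 : ℕ)) * pderiv p.1 (pderiv p.2 (monomial d r))))
      - (((wdeg d : ℕ) : ℝ) ^ 2 - Qd d) • monomial d r := by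
  classical
  rw [finsum_eq_finset_sum_of_support_subset _ (s := d.support ×ˢ d.support) (by
    intro p hp
    simp only [Function.mem_support] at hp
    have hD : pderiv p.1 (pderiv p.2 (monomial d r)) ≠ 0 := by
      intro h
      apply hp
      rw [h, mul_zero, smul_zero]
    rw [pd2_mon] at hD
    have hc : r * ((d p.2 : ℕ) : ℝ) * (((d - Finsupp.single p.2 1 : ℕ+ →₀ ℕ) p.1 : ℕ) : ℝ) ≠ 0 := by
      intro h
      apply hD
      rw [h]
      simp
    have h2 : d p.2 ≠ 0 := fun h0 => hc (by rw [h0]; push_cast; ring)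
    have h1' : (d - Finsupp.single p.2 1 : ℕ+ →₀ ℕ) p.1 ≠ 0 := fun h0 =>
      hc (by rw [h0]; push_cast; ring)
    have h1 : d p.1 ≠ 0 := by
      have := sub_single_apply_le d p.2 p.1
      omega
    rw [Finset.mem_coe, Finset.mem_product, Finsupp.mem_support_iff, Finsupp.mem_support_iff]
    exact ⟨h1, h2⟩)]
  have hsplit : ∀ p ∈ d.support ×ˢ d.support,
      ((((p.1 : ℕ) : ℝ) + 1) * (((p.2 : ℕ) : ℝ) + 1)) •
        ((qv ((p.1 : ℕ) + (p.2 : ℕ)) - qv (p.1 : ℕ) * qv (p.2 : ℕ)) *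
          pderiv p.1 (pderiv p.2 (monomial d r)))
      = ((((p.1 : ℕ) : ℝ) + 1) * (((p.2 : ℕ) : ℝ) + 1)) •
          (qv ((p.1 : ℕ) + (p.2 : ℕ)) * pderiv p.1 (pderiv p.2 (monomial d r)))
        - ((((p.1 : ℕ) : ℝ) + 1) * (((p.2 : ℕ) : ℝ) + 1)) •
          (qv (p.1 : ℕ) * qv (p.2 : ℕ) * pderiv p.1 (pderiv p.2 (monomial d r))) :=
    fun p _ => by rw [sub_mul, smul_sub]
  rw [Finset.sum_congr rfl hsplit, Finset.sum_sub_distrib]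
  congr 1
  have hB : ∀ p ∈ d.support ×ˢ d.support,
      ((((p.1 : ℕ) : ℝ) + 1) * (((p.2 : ℕ) : ℝ) + 1)) •
          (qv (p.1 : ℕ) * qv (p.2 : ℕ) * pderiv p.1 (pderiv p.2 (monomial d r)))
        = monomial d (((((p.1 : ℕ) : ℝ) + 1) * (((p.2 : ℕ) : ℝ) + 1)) *
            (r * ((d p.2 : ℕ) : ℝ) * (((d - Finsupp.single p.2 1 : ℕ+ →₀ ℕ) p.1 : ℕ) : ℝ))) :=
    fun p _ => by rw [qvqv_mul_pd2, smul_monomial, smul_eq_mul]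
  rw [Finset.sum_congr rfl hB, ← map_sum, smul_monomial, smul_eq_mul]
  congr 1
  exact coeff_identity d r

lemma rearrange (E1 T3 T4 f : P) (M Q c s : ℝ) :
    E1 - (M ^ 2 - Q) • f - c • (M • f) + s • T3 + T4 - (Q - M) • f + (M * (M - 1 + c)) • f
      = E1 + s • T3 + T4 := by
  module

theorem key (c s : ℝ) (d : ℕ+ →₀ ℕ) (r : ℝ) :
    Afun c s (monomial d r)
      + (((wdeg d : ℕ) : ℝ) * (((wdeg d : ℕ) : ℝ) - 1 + c)) • monomial d r
      ∈ wsub (· < wdeg d) := by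
  rw [Afun, piece1_eq, piece2_eq, piece5_eq, rearrange]
  exact add_mem (add_mem (piece1_first_mem d r) (Submodule.smul_mem _ _ (piece3_mem d r)))
    (piece4_mem d r)

end AfunAux

namespace AfunAux

noncomputable def Vset (f : P) : Finset ℕ+ :=
  f.support.biUnion Finsupp.support

lemma apply_eq_zero_of_not_mem_Vset {f : P} {i : ℕ+} (h : i ∉ Vset f) :
    ∀ d ∈ f.support, d i = 0 := by
  intro d hd
  by_contra h0
  exact h (Finset.mem_biUnion.mpr ⟨d, hd, Finsupp.mem_support_iff.mpr h0⟩)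

lemma pderiv_as_sum (i : ℕ+) (f : P) :
    pderiv i f = ∑ d ∈ f.support, monomial (d - Finsupp.single i 1) (coeff d f * (d i : ℝ)) := by
  conv_lhs => rw [f.as_sum]
  rw [map_sum]
  exact Finset.sum_congr rfl fun d _ => pderiv_monomial

lemma pderiv_eq_zero_of_not_mem_Vset {f : P} {i : ℕ+} (h : i ∉ Vset f) :
    pderiv i f = 0 := by
  rw [pderiv_as_sum]
  refine Finset.sum_eq_zero fun d hd => ?_
  rw [apply_eq_zero_of_not_mem_Vset h d hd]
  simp

lemma pderiv2_eq_zero_left {f : P} {i j : ℕ+} (h : i ∉ Vset f) :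
    pderiv i (pderiv j f) = 0 := by
  rw [pderiv_as_sum j f, map_sum]
  refine Finset.sum_eq_zero fun d hd => ?_
  rw [pderiv_monomial]
  have h1 : (d - Finsupp.single j 1 : ℕ+ →₀ ℕ) i = 0 := by
    have h2 := sub_single_apply_le d j i
    have h3 := apply_eq_zero_of_not_mem_Vset h d hd
    omega
  rw [h1]
  simp

lemma pderiv2_eq_zero_right {f : P} {i j : ℕ+} (h : j ∉ Vset f) :
    pderiv i (pderiv j f) = 0 := by
  rw [pderiv_eq_zero_of_not_mem_Vset h, map_zero]

lemma afun_add (c s : ℝ) (f g : P) : Afun c s (f + g) = Afun c s f + Afun c s g := by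
  have fin1 : ∀ h : P, (Function.support fun p : ℕ+ × ℕ+ =>
      ((((p.1 : ℕ) : ℝ) + 1) * (((p.2 : ℕ) : ℝ) + 1)) •
        ((qv ((p.1 : ℕ) + (p.2 : ℕ)) - qv (p.1 : ℕ) * qv (p.2 : ℕ)) *
          pderiv p.1 (pderiv p.2 h))).Finite := by
    intro h
    apply Set.Finite.subset (Vset h ×ˢ Vset h).finite_toSet
    intro p hp
    simp only [Function.mem_support] at hp
    rw [Finset.coe_product]
    constructor
    · by_contra h1
      exact hp (by rw [pderiv2_eq_zero_left (by simpa using h1), mul_zero, smul_zero])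
    · by_contra h1
      exact hp (by rw [pderiv2_eq_zero_right (by simpa using h1), mul_zero, smul_zero])
  have fin2 : ∀ (h : P) (w : ℕ+ → ℝ) (e : ℕ+ → ℕ), (Function.support fun i : ℕ+ =>
      w i • (qv (e i) * pderiv i h)).Finite := by
    intro h w e
    apply Set.Finite.subset (Vset h).finite_toSet
    intro i hi
    simp only [Function.mem_support] at hi
    by_contra h1
    exact hi (by rw [pderiv_eq_zero_of_not_mem_Vset (by simpa using h1), mul_zero, smul_zero])
  have fin4 : ∀ h : P, (Function.support fun p : ℕ × ℕ =>
      ((p.1 : ℝ) + (p.2 : ℝ) + 3) •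
        (qv p.1 * qv p.2 * pderiv ((p.1 + p.2 + 2).toPNat (by omega)) h)).Finite := by
    intro h
    set B : ℕ := (Vset h).sup (fun i => (i : ℕ)) with hB
    apply Set.Finite.subset ((Finset.range (B + 1) ×ˢ Finset.range (B + 1)).finite_toSet)
    rintro ⟨a, b⟩ hp
    simp only [Function.mem_support] at hp
    have hk : ((a + b + 2).toPNat (by omega) : ℕ+) ∈ Vset h := by
      by_contra h1
      exact hp (by rw [pderiv_eq_zero_of_not_mem_Vset h1, mul_zero, smul_zero])
    have hle : a + b + 2 ≤ B := Finset.le_sup (f := fun i : ℕ+ => (i : ℕ)) hk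
    rw [Finset.coe_product]
    constructor <;> · simp only [Finset.mem_coe, Finset.mem_range]; omega
  have E1 : (∑ᶠ p : ℕ+ × ℕ+,
      ((((p.1 : ℕ) : ℝ) + 1) * (((p.2 : ℕ) : ℝ) + 1)) •
        ((qv ((p.1 : ℕ) + (p.2 : ℕ)) - qv (p.1 : ℕ) * qv (p.2 : ℕ)) *
          pderiv p.1 (pderiv p.2 (f + g))))
      = (∑ᶠ p : ℕ+ × ℕ+,
      ((((p.1 : ℕ) : ℝ) + 1) * (((p.2 : ℕ) : ℝ) + 1)) •
        ((qv ((p.1 : ℕ) + (p.2 : ℕ)) - qv (p.1 : ℕ) * qv (p.2 : ℕ)) *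
          pderiv p.1 (pderiv p.2 f)))
        + (∑ᶠ p : ℕ+ × ℕ+,
      ((((p.1 : ℕ) : ℝ) + 1) * (((p.2 : ℕ) : ℝ) + 1)) •
        ((qv ((p.1 : ℕ) + (p.2 : ℕ)) - qv (p.1 : ℕ) * qv (p.2 : ℕ)) *
          pderiv p.1 (pderiv p.2 g))) := by
    rw [← finsum_add_distrib (fin1 f) (fin1 g)]
    exact finsum_congr fun p => by simp only [map_add, mul_add, smul_add]
  have E2 : ∀ w : ℕ+ → ℝ, ∀ e : ℕ+ → ℕ,
      (∑ᶠ i : ℕ+, w i • (qv (e i) * pderiv i (f + g)))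
      = (∑ᶠ i : ℕ+, w i • (qv (e i) * pderiv i f))
        + (∑ᶠ i : ℕ+, w i • (qv (e i) * pderiv i g)) := by
    intro w e
    rw [← finsum_add_distrib (fin2 f w e) (fin2 g w e)]
    exact finsum_congr fun i => by simp only [map_add, mul_add, smul_add]
  have E4 : (∑ᶠ p : ℕ × ℕ,
      ((p.1 : ℝ) + (p.2 : ℝ) + 3) •
        (qv p.1 * qv p.2 * pderiv ((p.1 + p.2 + 2).toPNat (by omega)) (f + g)))
      = (∑ᶠ p : ℕ × ℕ,
      ((p.1 : ℝ) + (p.2 : ℝ) + 3) •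
        (qv p.1 * qv p.2 * pderiv ((p.1 + p.2 + 2).toPNat (by omega)) f))
        + (∑ᶠ p : ℕ × ℕ,
      ((p.1 : ℝ) + (p.2 : ℝ) + 3) •
        (qv p.1 * qv p.2 * pderiv ((p.1 + p.2 + 2).toPNat (by omega)) g)) := by
    rw [← finsum_add_distrib (fin4 f) (fin4 g)]
    exact finsum_congr fun p => by simp only [map_add, mul_add, smul_add]
  unfold Afun
  rw [E1, E2 (fun i => ((i : ℕ) : ℝ) + 1) (fun i => (i : ℕ)),
    E2 (fun i => ((i : ℕ) : ℝ) + 1) (fun i => (i : ℕ) - 1),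
    E2 (fun i => ((i : ℕ) : ℝ) * (((i : ℕ) : ℝ) + 1)) (fun i => (i : ℕ)), E4]
  module

end AfunAux


/-- If `f` is a monomial of weighted degree `m` then
`A f + m(m-1+c) f` has weighted degree strictly less than `m` (every monomial in it has
weighted degree `< m`); in particular `A` maps the subspace of polynomials of weighted
degree at most `m` into itself. -/
theorem Afun_triangular (c s : ℝ) (m : ℕ) :
    (∀ (d : ℕ+ →₀ ℕ) (r : ℝ), r ≠ 0 → wdeg d = m →
        ∀ e ∈ (Afun c s (MvPolynomial.monomial d r)
            + ((m : ℝ) * ((m : ℝ) - 1 + c)) • MvPolynomial.monomial d r).support,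
          wdeg e < m) ∧
      (∀ f : MvPolynomial ℕ+ ℝ, (∀ d ∈ f.support, wdeg d ≤ m) →
        ∀ e ∈ (Afun c s f).support, wdeg e ≤ m) := by
  constructor
  · intro d r hr hm e he
    subst hm
    exact (AfunAux.mem_wsub.mp (AfunAux.key c s d r)) e he
  · intro f hf e he
    refine (AfunAux.mem_wsub (Q := fun n => n ≤ m)).mp ?_ e he
    have hrw : Afun c s f = ∑ v ∈ f.support, Afun c s (monomial v (coeff v f)) := by
      conv_lhs => rw [f.as_sum]
      exact map_sum (AddMonoidHom.mk' (Afun c s) (AfunAux.afun_add c s)) _ _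
    rw [hrw]
    refine Submodule.sum_mem _ fun v hv => ?_
    have hk := AfunAux.key c s v (coeff v f)
    have hle : wdeg v ≤ m := hf v hv
    have h1 : Afun c s (monomial v (coeff v f))
        = (Afun c s (monomial v (coeff v f))
            + (((wdeg v : ℕ) : ℝ) * (((wdeg v : ℕ) : ℝ) - 1 + c)) • monomial v (coeff v f))
          - (((wdeg v : ℕ) : ℝ) * (((wdeg v : ℕ) : ℝ) - 1 + c)) • monomial v (coeff v f) := by
      abel
    rw [h1]
    exact sub_mem (AfunAux.wsub_mono (fun n hn => by omega) hk)
      (Submodule.smul_mem _ _ (AfunAux.monomial_mem_wsub fun _ => hle))
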